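/- arXiv:2605.11943 — 4 statements merged into one kernel-verified Lean document; each statement's English description precedes it below -/
import Mathlib

section
/- Let R₀ be a commutative Noetherian ring and R = ⊕_{n≥0} R_n a standard graded R₀-algebra which is flat as an R₀-module via the inclusion R₀ ↪ R. If E = ⊕_{n∈ℤ} E_n is an injective object in the category of graded R-modules, then each graded component E_n is an injective R₀-module. -/
open CategoryTheory Opposite

noncomputable section

universe u

namespace Paper

variable {R₀ : Type u} [CommRing R₀]

/-- The dimension over `R₀/I` of an `I`-torsion `R₀`-module `X`,
realised as `finrank_{R₀/I} (X/IX)`. -/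
def vdim (I : Ideal R₀) (X : Type u) [AddCommGroup X] [Module R₀ X] : ℕ :=
  Module.finrank (R₀ ⧸ I) (X ⧸ (I • (⊤ : Submodule R₀ X)))

/-- Cardinal-valued version of `vdim`. -/
def vrank (I : Ideal R₀) (X : Type u) [AddCommGroup X] [Module R₀ X] : Cardinal.{u} :=
  Module.rank (R₀ ⧸ I) (X ⧸ (I • (⊤ : Submodule R₀ X)))

/-- `Ext^i_{R₀}(R₀/I, X)`. -/
def extQuot (I : Ideal R₀) (i : ℕ) (X : Type u) [AddCommGroup X] [Module R₀ X] :
    ModuleCat.{u} R₀ :=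
  ((Ext R₀ (ModuleCat.{u} R₀) i).obj (op (ModuleCat.of R₀ (R₀ ⧸ I)))).obj (ModuleCat.of R₀ X)

/-- The `i`-th Bass number `μ^i(I, X)` with respect to a maximal ideal `I`
(as an element of `ℕ`). -/
def bass (I : Ideal R₀) (i : ℕ) (X : Type u) [AddCommGroup X] [Module R₀ X] : ℕ :=
  vdim I (extQuot I i X)

/-- Cardinal valued Bass number. -/
def bassC (I : Ideal R₀) (i : ℕ) (X : Type u) [AddCommGroup X] [Module R₀ X] : Cardinal.{u} :=
  vrank I (extQuot I i X)

/-- `dim_{κ(𝔭)} (X_𝔭)` for an `R₀`-module `X` whose localization is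
killed by `𝔭 (R₀)_𝔭`. -/
def vdimLoc (𝔭 : Ideal R₀) [𝔭.IsPrime] (X : Type u) [AddCommGroup X] [Module R₀ X] :
    Cardinal.{u} :=
  vrank (Ideal.map (algebraMap R₀ (Localization.AtPrime 𝔭)) 𝔭)
    (LocalizedModule 𝔭.primeCompl X)

/-- Bass number `μ^i(𝔭, X) = dim_{κ(𝔭)} (Ext^i_{R₀}(R₀/𝔭, X))_𝔭`. -/
def bassLoc (𝔭 : Ideal R₀) [𝔭.IsPrime] (i : ℕ) (X : Type u) [AddCommGroup X] [Module R₀ X] :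
    Cardinal.{u} :=
  vdimLoc 𝔭 (extQuot 𝔭 i X)

section Graded

variable (R : Type u) [CommRing R] [Algebra R₀ R] (𝒜 : ℕ → Submodule R₀ R) [GradedAlgebra 𝒜]

/-- The irrelevant ideal `R₊` of a graded ring. -/
def irr : Ideal R := (HomogeneousIdeal.irrelevant 𝒜).toIdeal

variable (R₀) in
/-- `R` is a *standard* graded `R₀`-algebra: `R₀` is the degree-zero part, it embeds in `R`,
and `R` is generated over `R₀` by finitely many elements of degree `1`. -/
structure IsStdGraded : Prop where
  adjoin_one : Algebra.adjoin R₀ (𝒜 1 : Set R) = ⊤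
  fg_one : (𝒜 1).FG
  inj : Function.Injective (algebraMap R₀ R)
  degree_zero : 𝒜 0 = LinearMap.range (Algebra.linearMap R₀ R)

/-- `ℳ` is a (ℤ-indexed) grading making `M` a graded module over the graded ring `(R, 𝒜)`. -/
structure IsGradedMod (M : Type u) [AddCommGroup M] [Module R₀ M] [Module R M]
    [IsScalarTower R₀ R M] (ℳ : ℤ → Submodule R₀ M) : Prop where
  internal : DirectSum.IsInternal ℳ
  smul_mem : ∀ (i : ℕ) (n : ℤ) (r : R) (m : M), r ∈ 𝒜 i → m ∈ ℳ n → r • m ∈ ℳ (n + (i : ℤ))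

/-- The scalar action of `R` transported to the restriction of scalars. -/
def rsmul {X : Type u} [AddCommGroup X] [Module R X] (r : R) (x : RestrictScalars R₀ R X) :
    RestrictScalars R₀ R X :=
  (RestrictScalars.addEquiv R₀ R X).symm (r • (RestrictScalars.addEquiv R₀ R X x))

/-- `ℋ` is a grading making the `R`-module `X` (viewed over `R₀` by restriction of scalars)
a graded module over the graded ring `(R, 𝒜)`. -/
structure IsGradedRes (X : Type u) [AddCommGroup X] [Module R X]
    (ℋ : ℤ → Submodule R₀ (RestrictScalars R₀ R X)) : Prop where
  internal : DirectSum.IsInternal ℋ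
  smul_mem : ∀ (i : ℕ) (n : ℤ) (r : R) (x : RestrictScalars R₀ R X),
    r ∈ 𝒜 i → x ∈ ℋ n → rsmul R r x ∈ ℋ (n + (i : ℤ))

/-- The local cohomology module `H^j_I(M)`. -/
def lc (I : Ideal R) (j : ℕ) (M : Type u) [AddCommGroup M] [Module R M] : ModuleCat.{u} R :=
  (localCohomology I j).obj (ModuleCat.of R M)

/-- The diagram `t ↦ J + I^t` of ideals of `R`. -/
def sumPowers (J I : Ideal R) : ℕᵒᵖ ⥤ Ideal R where
  obj t := J ⊔ I ^ (unop t)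
  map w := ⟨⟨sup_le_sup_left (Ideal.pow_le_pow_right w.unop.down.down) J⟩⟩

/-- The generalized local cohomology module `H^j_I(R/J, M) = colim_t Ext^j_R(R/(J + I^t), M)`. -/
def glcQuot (J I : Ideal R) (j : ℕ) (M : Type u) [AddCommGroup M] [Module R M] :
    ModuleCat.{u} R :=
  (localCohomology.ofDiagram (sumPowers R J I) j).obj (ModuleCat.of R M)

/-- The cohomological dimension `cd_I(M)` (as an extended natural number). -/
def cd (I : Ideal R) (M : Type u) [AddCommGroup M] [Module R M] : ℕ∞ :=
  sSup {c : ℕ∞ | ∃ i : ℕ, c = i ∧ Nontrivial (lc R I i M)}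

/-- The finiteness dimension `f_I(M)` (as an extended natural number). -/
def fdim (I : Ideal R) (M : Type u) [AddCommGroup M] [Module R M] : ℕ∞ :=
  sInf {c : ℕ∞ | ∃ i : ℕ, c = i ∧ ¬ Module.Finite R (lc R I i M)}

/-- The `I`-torsion submodule `Γ_I(M)`. -/
def torsionSub (I : Ideal R) (M : Type u) [AddCommGroup M] [Module R M] : Submodule R M :=
  ⨆ t : ℕ, Submodule.torsionBySet R M ((I ^ t : Ideal R) : Set R)


end Graded

section StdAux

open TensorProduct DirectSum

variable {R : Type u} [CommRing R] [Algebra R₀ R] (𝒜 : ℕ → Submodule R₀ R) [GradedAlgebra 𝒜]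
variable (N : Type u) [AddCommGroup N] [Module R₀ N]

/-- The degree-`k` projection of `R`, as an `R₀`-linear map. -/
def prDeg (k : ℕ) : R →ₗ[R₀] R :=
  (𝒜 k).subtype ∘ₗ (DirectSum.component R₀ ℕ (fun i => ↥(𝒜 i)) k) ∘ₗ
    (DirectSum.decomposeAlgEquiv 𝒜).toLinearMap

lemma prDeg_apply (k : ℕ) (r : R) : prDeg 𝒜 k r = ((DirectSum.decompose 𝒜 r) k : R) := rfl

lemma prDeg_of_mem_same {k : ℕ} {r : R} (hr : r ∈ 𝒜 k) : prDeg 𝒜 k r = r := by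
  rw [prDeg_apply, DirectSum.decompose_of_mem_same 𝒜 hr]

lemma prDeg_of_mem_ne {j k : ℕ} {r : R} (hr : r ∈ 𝒜 j) (hjk : j ≠ k) : prDeg 𝒜 k r = 0 := by
  rw [prDeg_apply, DirectSum.decompose_of_mem_ne 𝒜 hr hjk]

/-- The degree-`k` component of `R ⊗[R₀] N` for the grading induced from `𝒜`. -/
def tcomp (k : ℤ) : Submodule R₀ (TensorProduct R₀ R N) :=
  if 0 ≤ k then
    LinearMap.range (TensorProduct.map ((𝒜 k.toNat).subtype) (LinearMap.id (R := R₀) (M := N)))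
  else ⊥

lemma tcomp_def (k : ℤ) : tcomp 𝒜 N k =
    (if 0 ≤ k then
      LinearMap.range (TensorProduct.map ((𝒜 k.toNat).subtype) (LinearMap.id (R := R₀) (M := N)))
    else ⊥) := rfl

lemma tmul_mem_tcomp {k : ℕ} {r : R} (hr : r ∈ 𝒜 k) (x : N) :
    r ⊗ₜ[R₀] x ∈ tcomp 𝒜 N (k : ℤ) := by
  rw [tcomp_def, if_pos (Int.ofNat_nonneg k)]
  exact ⟨(⟨r, by simpa using hr⟩ : (𝒜 (k : ℤ).toNat)) ⊗ₜ x, by simp⟩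

lemma tcomp_fix {k : ℤ} (hk : 0 ≤ k) :
    ∀ z ∈ tcomp 𝒜 N k, LinearMap.rTensor N (prDeg 𝒜 k.toNat) z = z := by
  intro z hz
  rw [tcomp_def, if_pos hk] at hz
  obtain ⟨t, rfl⟩ := hz
  induction t using TensorProduct.induction_on with
  | zero => simp
  | tmul s x => simp [prDeg_of_mem_same 𝒜 s.2]
  | add a b ha hb => simp only [map_add, ha, hb]

lemma tcomp_kill {k : ℕ} {m : ℤ} (hm : m ≠ (k : ℤ)) :
    ∀ z ∈ tcomp 𝒜 N m, LinearMap.rTensor N (prDeg 𝒜 k) z = 0 := by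
  intro z hz
  rw [tcomp_def] at hz
  split_ifs at hz with h
  · obtain ⟨t, rfl⟩ := hz
    induction t using TensorProduct.induction_on with
    | zero => simp
    | tmul s x =>
        have hne : m.toNat ≠ k := by omega
        simp [prDeg_of_mem_ne 𝒜 s.2 hne]
    | add a b ha hb => simp only [map_add, ha, hb, add_zero]
  · obtain rfl : z = 0 := by simpa using hz
    rw [map_zero]

lemma tcomp_isInternal (n : ℤ) :
    DirectSum.IsInternal (fun m : ℤ => tcomp 𝒜 N (m - n)) := by
  classical
  rw [DirectSum.isInternal_submodule_iff_iSupIndep_and_iSup_eq_top]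
  constructor
  · intro m
    rcases lt_or_ge (m - n) 0 with h | h
    · have hbot : tcomp 𝒜 N (m - n) = ⊥ := by rw [tcomp_def, if_neg (by omega)]
      show Disjoint (tcomp 𝒜 N (m - n)) _
      rw [hbot]
      exact disjoint_bot_left
    · rw [disjoint_iff_inf_le]
      intro z hz
      obtain ⟨hz1, hz2⟩ := Submodule.mem_inf.mp hz
      have hker : (⨆ (j) (_ : j ≠ m), tcomp 𝒜 N (j - n)) ≤
          LinearMap.ker (LinearMap.rTensor N (prDeg 𝒜 (m - n).toNat)) := by
        refine iSup_le fun j => iSup_le fun hj => fun w hw => ?_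
        exact LinearMap.mem_ker.mpr (tcomp_kill 𝒜 N (by omega) w hw)
      have hz0 : LinearMap.rTensor N (prDeg 𝒜 (m - n).toNat) z = 0 :=
        LinearMap.mem_ker.mp (hker hz2)
      rw [Submodule.mem_bot, ← tcomp_fix 𝒜 N h z hz1, hz0]
  · rw [eq_top_iff, ← TensorProduct.span_tmul_eq_top R₀ R N, Submodule.span_le]
    rintro _ ⟨r, x, rfl⟩
    rw [SetLike.mem_coe, ← DirectSum.sum_support_decompose 𝒜 r, TensorProduct.sum_tmul]
    refine Submodule.sum_mem _ fun i _ => Submodule.mem_iSup_of_mem (n + (i : ℤ)) ?_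
    rw [show (n + (i : ℤ)) - n = ((i : ℕ) : ℤ) by omega]
    exact tmul_mem_tcomp 𝒜 N ((DirectSum.decompose 𝒜 r) i).2 x

lemma tcomp_smul_mem {i : ℕ} {k : ℤ} {r : R} (hr : r ∈ 𝒜 i) {z : TensorProduct R₀ R N}
    (hz : z ∈ tcomp 𝒜 N k) : r • z ∈ tcomp 𝒜 N (k + (i : ℤ)) := by
  rw [tcomp_def] at hz
  split_ifs at hz with h
  · obtain ⟨t, rfl⟩ := hz
    rw [tcomp_def, if_pos (by omega)]
    induction t using TensorProduct.induction_on with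
    | zero => simp
    | tmul s x =>
        have hm : r * (s : R) ∈ 𝒜 ((k + (i : ℤ)).toNat) := by
          have h2 := SetLike.mul_mem_graded hr s.2
          rwa [show (k + (i : ℤ)).toNat = i + k.toNat by omega]
        refine ⟨(⟨r * (s : R), hm⟩ : (𝒜 (k + (i : ℤ)).toNat)) ⊗ₜ x, ?_⟩
        simp [TensorProduct.smul_tmul', smul_eq_mul]
    | add a b ha hb =>
        rw [map_add, smul_add]
        exact add_mem ha hb
  · obtain rfl : z = 0 := by simpa using hz
    rw [smul_zero]
    exact zero_mem _

lemma tcomp_baseChange_mem {N' : Type u} [AddCommGroup N'] [Module R₀ N'] (f : N →ₗ[R₀] N')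
    {k : ℤ} {z : TensorProduct R₀ R N} (hz : z ∈ tcomp 𝒜 N k) :
    f.baseChange R z ∈ tcomp 𝒜 N' k := by
  rw [tcomp_def] at hz
  split_ifs at hz with h
  · obtain ⟨t, rfl⟩ := hz
    rw [tcomp_def, if_pos h]
    induction t using TensorProduct.induction_on with
    | zero => simp
    | tmul s x => exact ⟨s ⊗ₜ f x, by simp⟩
    | add a b ha hb =>
        rw [map_add, map_add]
        exact add_mem ha hb
  · obtain rfl : z = 0 := by simpa using hz
    rw [map_zero]
    exact zero_mem _

end StdAux

/-- If `R` is a standard graded `R₀`-algebra, flat over the Noetherian base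
ring `R₀`, and `E = ⊕ₙ Eₙ` is an injective object of the category of graded `R`-modules (i.e.
every degree-zero homomorphism into `E` from a graded submodule extends), then each component
`Eₙ` is an injective `R₀`-module. -/
theorem statement0 (R₀ : Type u) [CommRing R₀] [IsNoetherianRing R₀]
    (R : Type u) [CommRing R] [Algebra R₀ R] [Module.Flat R₀ R]
    (𝒜 : ℕ → Submodule R₀ R) [GradedAlgebra 𝒜] (hstd : IsStdGraded R₀ R 𝒜)
    (E : Type u) [AddCommGroup E] [Module R₀ E] [Module R E] [IsScalarTower R₀ R E]
    (ℰ : ℤ → Submodule R₀ E) (hE : IsGradedMod R 𝒜 E ℰ)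
    (hinj : ∀ (A : Type u) [AddCommGroup A] [Module R₀ A] [Module R A] [IsScalarTower R₀ R A]
      (B : Type u) [AddCommGroup B] [Module R₀ B] [Module R B] [IsScalarTower R₀ R B]
      (𝒜A : ℤ → Submodule R₀ A) (ℬ : ℤ → Submodule R₀ B),
      IsGradedMod R 𝒜 A 𝒜A → IsGradedMod R 𝒜 B ℬ →
      ∀ ι : A →ₗ[R] B, Function.Injective ι → (∀ n : ℤ, ∀ a ∈ 𝒜A n, ι a ∈ ℬ n) →
      ∀ φ : A →ₗ[R] E, (∀ n : ℤ, ∀ a ∈ 𝒜A n, φ a ∈ ℰ n) →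
      ∃ ψ : B →ₗ[R] E, (∀ n : ℤ, ∀ b ∈ ℬ n, ψ b ∈ ℰ n) ∧ ψ.comp ι = φ) :
    ∀ n : ℤ, Module.Injective R₀ ↥(ℰ n) := by
  intro n
  apply Module.Baer.injective
  intro I g
  classical
  -- the base-change of the inclusion `I → R₀`
  let ι : TensorProduct R₀ R ↥I →ₗ[R] TensorProduct R₀ R R₀ :=
    (Submodule.subtype I).baseChange R
  have hι : Function.Injective ι := by
    have h1 : Function.Injective (LinearMap.lTensor R (Submodule.subtype I)) :=
      Module.Flat.lTensor_preserves_injective_linearMap _ (Submodule.injective_subtype I)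
    rwa [← LinearMap.baseChange_eq_ltensor] at h1
  let φ : TensorProduct R₀ R ↥I →ₗ[R] E := ((ℰ n).subtype ∘ₗ g).liftBaseChange R
  have hGA : IsGradedMod R 𝒜 (TensorProduct R₀ R ↥I) (fun m => tcomp 𝒜 ↥I (m - n)) := by
    refine ⟨tcomp_isInternal 𝒜 ↥I n, fun i m r z hr hz => ?_⟩
    have := tcomp_smul_mem 𝒜 ↥I hr hz
    rwa [show (m - n) + (i : ℤ) = (m + (i : ℤ)) - n by omega] at this
  have hGB : IsGradedMod R 𝒜 (TensorProduct R₀ R R₀) (fun m => tcomp 𝒜 R₀ (m - n)) := by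
    refine ⟨tcomp_isInternal 𝒜 R₀ n, fun i m r z hr hz => ?_⟩
    have := tcomp_smul_mem 𝒜 R₀ hr hz
    rwa [show (m - n) + (i : ℤ) = (m + (i : ℤ)) - n by omega] at this
  have hιgr : ∀ m : ℤ, ∀ a ∈ (fun m => tcomp 𝒜 ↥I (m - n)) m,
      ι a ∈ (fun m => tcomp 𝒜 R₀ (m - n)) m :=
    fun m a ha => tcomp_baseChange_mem 𝒜 ↥I (Submodule.subtype I) ha
  have hφgr : ∀ m : ℤ, ∀ a ∈ (fun m => tcomp 𝒜 ↥I (m - n)) m, φ a ∈ ℰ m := by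
    intro m a ha
    replace ha : a ∈ tcomp 𝒜 ↥I (m - n) := ha
    rw [tcomp_def] at ha
    split_ifs at ha with h
    · obtain ⟨t, rfl⟩ := ha
      induction t using TensorProduct.induction_on with
      | zero => simp
      | tmul s x =>
          have hmem : (s : R) • ((ℰ n).subtype (g x)) ∈ ℰ (n + ((m - n).toNat : ℤ)) :=
            hE.smul_mem (m - n).toNat n (s : R) _ s.2 (g x).2
          rw [show n + (((m - n).toNat : ℕ) : ℤ) = m by omega] at hmem
          simpa [φ, LinearMap.liftBaseChange_tmul] using hmem
      | add a b ha hb =>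
          rw [map_add, map_add]
          exact add_mem ha hb
    · obtain rfl : a = 0 := by simpa using ha
      rw [map_zero]
      exact zero_mem _
  obtain ⟨ψ, hψgr, hψι⟩ := hinj (TensorProduct R₀ R ↥I) (TensorProduct R₀ R R₀)
    (fun m => tcomp 𝒜 ↥I (m - n)) (fun m => tcomp 𝒜 R₀ (m - n)) hGA hGB ι hι hιgr φ hφgr
  have h1mem : ∀ a : R₀, ψ ((1 : R) ⊗ₜ[R₀] a) ∈ ℰ n := by
    intro a
    refine hψgr n _ ?_
    rw [show n - n = ((0 : ℕ) : ℤ) by omega]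
    exact tmul_mem_tcomp 𝒜 R₀ (SetLike.one_mem_graded 𝒜) a
  refine ⟨{ toFun := fun a => ⟨ψ ((1 : R) ⊗ₜ[R₀] a), h1mem a⟩
            map_add' := fun a b => Subtype.ext
              (show ψ ((1 : R) ⊗ₜ[R₀] (a + b)) = ψ ((1 : R) ⊗ₜ[R₀] a) + ψ ((1 : R) ⊗ₜ[R₀] b) by
                rw [TensorProduct.tmul_add, map_add])
            map_smul' := fun c a => Subtype.ext ?_ }, ?_⟩
  · show ψ ((1 : R) ⊗ₜ[R₀] (c • a)) = c • ψ ((1 : R) ⊗ₜ[R₀] a)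
    rw [TensorProduct.tmul_smul]
    exact (ψ.restrictScalars R₀).map_smul c _
  · intro x hx
    refine Subtype.ext ?_
    have h2 := LinearMap.congr_fun hψι ((1 : R) ⊗ₜ[R₀] (⟨x, hx⟩ : ↥I))
    simp only [LinearMap.coe_comp, Function.comp_apply] at h2
    have h3 : ι ((1 : R) ⊗ₜ[R₀] (⟨x, hx⟩ : ↥I)) = (1 : R) ⊗ₜ[R₀] x := by
      simp [ι]
    have h4 : φ ((1 : R) ⊗ₜ[R₀] (⟨x, hx⟩ : ↥I)) = ((ℰ n).subtype (g ⟨x, hx⟩)) := by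
      simp [φ, LinearMap.liftBaseChange_tmul]
    show ψ ((1 : R) ⊗ₜ[R₀] x) = ((g ⟨x, hx⟩ : ↥(ℰ n)) : E)
    rw [← h3, h2, h4]
    rfl


end Paper
end
end

section
/- Let S be a commutative ring and X an S-module. Then X is finitely generated if and only if for every direct system (M_i)_{i∈Λ} of S-modules with injective transition maps, the natural homomorphism colim Hom_S(X, M_i) → Hom_S(X, colim M_i) is an isomorphism. -/
open CategoryTheory Opposite

noncomputable section

universe u

namespace Paper

variable {R₀ : Type u} [CommRing R₀]

/-- An `S`-module `X` is finitely generated if and only if for every direct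
system `(M_i)` of `S`-modules with injective transition maps, the natural homomorphism
`colim Hom_S(X, M_i) → Hom_S(X, colim M_i)` is an isomorphism. -/
theorem statement2 (S : Type u) [CommRing S] (X : Type u) [AddCommGroup X] [Module S X] :
    Module.Finite S X ↔
      ∀ (Λ : Type u) [Preorder Λ] [IsDirected Λ (· ≤ ·)] [Nonempty Λ] [DecidableEq Λ]
        (Mi : Λ → Type u) [∀ i, AddCommGroup (Mi i)] [∀ i, Module S (Mi i)]
        (f : ∀ i j, i ≤ j → Mi i →ₗ[S] Mi j) [DirectedSystem Mi (fun i j h => f i j h)],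
        (∀ i j h, Function.Injective (f i j h)) →
        Function.Bijective
          (Module.DirectLimit.lift S Λ (fun i => X →ₗ[S] Mi i)
            (fun i j h => LinearMap.llcomp S X (Mi i) (Mi j) (f i j h))
            (fun i => LinearMap.llcomp S X (Mi i) (Module.DirectLimit Mi f)
              (Module.DirectLimit.of S Λ Mi f i))
            (by intro i j hij g
                ext y
                simp [Module.DirectLimit.of_f])) := by
  classical
  constructor
  · -- forward: finitely generated implies the natural map is bijective
    intro hX Λ _ _ _ _ Mi _ _ f _ hf
    have hofinj : ∀ i, Function.Injective (Module.DirectLimit.of S Λ Mi f i) := by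
      intro i a b hab
      have h0 : Module.DirectLimit.of S Λ Mi f i (a - b) = 0 := by
        rw [map_sub, hab, sub_self]
      obtain ⟨j, hij, hj⟩ := Module.DirectLimit.of.zero_exact h0
      have := hf i j hij (by rw [hj, map_zero] : f i j hij (a - b) = f i j hij 0)
      exact sub_eq_zero.mp (by simpa using this)
    constructor
    · rw [injective_iff_map_eq_zero]
      intro z hz
      obtain ⟨i, g, rfl⟩ := Module.DirectLimit.exists_of z
      rw [Module.DirectLimit.lift_of] at hz
      have hg : g = 0 := by
        ext x
        apply hofinj i
        have := LinearMap.congr_fun hz x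
        simpa using this
      rw [hg, map_zero]
    · intro h
      obtain ⟨s, hs⟩ := hX.fg_top
      -- each h x lies in the range of some `of i`
      have hex : ∀ x : X, ∃ i m, Module.DirectLimit.of S Λ Mi f i m = h x := fun x =>
        Module.DirectLimit.exists_of (h x)
      choose idx mem hmem using hex
      obtain ⟨j, hj⟩ := (s.image idx).exists_le
      have hrange : ∀ x ∈ (s : Set X), h x ∈ LinearMap.range (Module.DirectLimit.of S Λ Mi f j) := by
        intro x hx
        have hle : idx x ≤ j := hj _ (Finset.mem_image_of_mem idx hx)
        exact ⟨f (idx x) j hle (mem x), by rw [Module.DirectLimit.of_f, hmem]⟩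
      have htop : ∀ x : X, h x ∈ LinearMap.range (Module.DirectLimit.of S Λ Mi f j) := by
        intro x
        have hx : x ∈ Submodule.span S (s : Set X) := by rw [hs]; trivial
        have : Submodule.span S (s : Set X) ≤
            (LinearMap.range (Module.DirectLimit.of S Λ Mi f j)).comap h :=
          Submodule.span_le.mpr (fun y hy => hrange y hy)
        exact this hx
      let e := LinearEquiv.ofInjective (Module.DirectLimit.of S Λ Mi f j) (hofinj j)
      let g : X →ₗ[S] Mi j :=
        e.symm.toLinearMap ∘ₗ (h.codRestrict (LinearMap.range (Module.DirectLimit.of S Λ Mi f j)) htop)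
      refine ⟨Module.DirectLimit.of S Λ (fun i => X →ₗ[S] Mi i)
        (fun i j h => LinearMap.llcomp S X (Mi i) (Mi j) (f i j h)) j g, ?_⟩
      rw [Module.DirectLimit.lift_of]
      ext x
      show Module.DirectLimit.of S Λ Mi f j (g x) = h x
      have h1 : Module.DirectLimit.of S Λ Mi f j (g x) =
          (e (g x) : Module.DirectLimit Mi f) :=
        (LinearEquiv.ofInjective_apply _ (g x)).symm
      have h2 : e (g x) =
          h.codRestrict (LinearMap.range (Module.DirectLimit.of S Λ Mi f j)) htop x :=
        e.apply_symm_apply _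
      rw [h1, h2]
      rfl
  · -- backward
    intro H
    let Λ := {N : Submodule S X // N.FG}
    haveI : IsDirected Λ (· ≤ ·) :=
      ⟨fun a b => ⟨⟨a.1 ⊔ b.1, a.2.sup b.2⟩, Subtype.coe_le_coe.mp le_sup_left, Subtype.coe_le_coe.mp le_sup_right⟩⟩
    haveI : Nonempty Λ := ⟨⟨⊥, Submodule.fg_bot⟩⟩
    let Mi : Λ → Type u := fun N => N.1
    let f : ∀ i j : Λ, i ≤ j → Mi i →ₗ[S] Mi j := fun i j h => Submodule.inclusion h
    haveI : DirectedSystem Mi (fun i j h => f i j h) :=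
      ⟨fun i x => rfl, fun _ _ _ hij hjk x => rfl⟩
    have hf : ∀ (i j : Λ) (h : i ≤ j), Function.Injective (f i j h) :=
      fun i j h => Submodule.inclusion_injective h
    have hb := H Λ Mi f hf
    let π : Module.DirectLimit Mi f →ₗ[S] X :=
      Module.DirectLimit.lift S Λ Mi f (fun i => (i.1).subtype) (fun i j hij x => rfl)
    have hπ : Function.Bijective π := by
      constructor
      · rw [injective_iff_map_eq_zero]
        intro z hz
        obtain ⟨i, m, rfl⟩ := Module.DirectLimit.exists_of z
        replace hz : (i.1).subtype m = 0 := by rw [← hz]; symm; refine (Module.DirectLimit.lift_of ..).trans ?_; rfl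
        have : m = 0 := Subtype.ext hz
        rw [this, map_zero]
      · intro x
        refine ⟨Module.DirectLimit.of S Λ Mi f ⟨Submodule.span S {x}, Submodule.fg_span_singleton x⟩
          ⟨x, Submodule.mem_span_singleton_self x⟩, ?_⟩
        refine (Module.DirectLimit.lift_of ..).trans ?_
        rfl
    let eπ := LinearEquiv.ofBijective π hπ
    obtain ⟨z, hz⟩ := hb.2 eπ.symm.toLinearMap
    obtain ⟨j, g, rfl⟩ := Module.DirectLimit.exists_of z
    rw [Module.DirectLimit.lift_of] at hz
    have hall : ∀ x : X, x ∈ j.1 := by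
      intro x
      have h1 : π (Module.DirectLimit.of S Λ Mi f j (g x)) = (g x : X) := by
        refine (Module.DirectLimit.lift_of ..).trans ?_
        rfl
      have h2 : Module.DirectLimit.of S Λ Mi f j (g x) = eπ.symm x :=
        LinearMap.congr_fun hz x
      have h3 : π (eπ.symm x) = x := eπ.apply_symm_apply x
      have : (g x : X) = x := by rw [← h1, h2, h3]
      rw [← this]; exact (g x).2
    have : j.1 = ⊤ := top_le_iff.mp (fun x _ => hall x)
    rw [Module.finite_def, ← this]
    exact j.2

end Paper
end
end

section
/- Let R be a standard graded Noetherian ring and N a graded R-module. Then N is a Noetherian R-module if and only if there exist integers t ≤ s such that: N_n = 0 for all n < t; N_{n+1} = R₁·N_n for all n ≥ s; and N_n is a finitely generated R₀-module for all t ≤ n ≤ s. -/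
open CategoryTheory Opposite

noncomputable section

universe u

namespace Paper

variable {R₀ : Type u} [CommRing R₀]

section Aux

variable {R₀ : Type u} [CommRing R₀]

theorem proj_helper {ι : Type*} [DecidableEq ι]
    {M : Type u} [AddCommGroup M] [Module R₀ M]
    {ℳ : ι → Submodule R₀ M} (h : DirectSum.IsInternal ℳ)
    {P : ι → Submodule R₀ M} (hP : ∀ i, P i ≤ ℳ i) {k : ι} {x : M}
    (hx : x ∈ ℳ k) (hx' : x ∈ ⨆ i, P i) : x ∈ P k := by
  classical
  obtain ⟨f, hf, hsum⟩ := (Submodule.mem_iSup_iff_exists_finsupp P x).mp hx'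
  set g : DirectSum ι (fun i => ℳ i) :=
    f.support.sum (fun i => DirectSum.of (fun i => ℳ i) i ⟨f i, hP i (hf i)⟩) with hg_def
  have hg : DirectSum.coeAddMonoidHom ℳ g = x := by
    rw [hg_def, map_sum]
    simp only [DirectSum.coeAddMonoidHom_of]
    exact hsum
  have h2 : DirectSum.coeAddMonoidHom ℳ (DirectSum.of (fun i => ℳ i) k ⟨x, hx⟩) = x :=
    DirectSum.coeAddMonoidHom_of ℳ k ⟨x, hx⟩
  have heq : g = DirectSum.of (fun i => ℳ i) k ⟨x, hx⟩ := h.injective (hg.trans h2.symm)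
  have hk : (g k : M) = x := by rw [heq, DirectSum.of_eq_same]
  have hmem : (g k : M) ∈ P k := by
    rw [hg_def, DFinsupp.finset_sum_apply]
    by_cases hks : k ∈ f.support
    · rw [Finset.sum_eq_single_of_mem k hks]
      · simp only [DirectSum.of_eq_same]; exact hf k
      · intro b _ hbk
        rw [DirectSum.of_eq_of_ne _ _ _ hbk.symm]
    · have hz : ∀ b ∈ f.support,
          ((DirectSum.of (fun i => ℳ i) b ⟨f b, hP b (hf b)⟩) k : ℳ k) = 0 := by
        intro b hb
        rw [DirectSum.of_eq_of_ne _ _ _ (by rintro rfl; exact hks hb)]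
      rw [Finset.sum_congr rfl hz]
      simp
  rw [← hk]; exact hmem

theorem exists_finite_subset_span {A : Type*} {M : Type*} [Semiring A] [AddCommMonoid M]
    [Module A M] {s : Set M} (h : (Submodule.span A s).FG) :
    ∃ T : Set M, T ⊆ s ∧ T.Finite ∧ Submodule.span A T = Submodule.span A s := by
  obtain ⟨u, hu⟩ := h
  have hmem : ∀ x : M, x ∈ u → x ∈ Submodule.span A s := by
    intro x hx
    rw [← hu]
    exact Submodule.subset_span hx
  choose f hf1 hf2 using fun (x : u) => Submodule.mem_span_finite_of_mem_span (hmem x x.2)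
  refine ⟨⋃ x : u, ↑(f x), Set.iUnion_subset fun x => hf1 x,
    Set.finite_iUnion fun x => (f x).finite_toSet, ?_⟩
  refine le_antisymm (Submodule.span_mono (Set.iUnion_subset fun x => hf1 x)) ?_
  rw [← hu]
  refine Submodule.span_le.mpr fun x hx => ?_
  exact Submodule.span_mono
    (Set.subset_iUnion (fun (x : u) => ((f x : Finset M) : Set M)) ⟨x, hx⟩) (hf2 ⟨x, hx⟩)

theorem list_prod_mem_pow {R : Type u} [CommRing R] [Algebra R₀ R] (P : Submodule R₀ R) :
    ∀ (l : List R), (∀ y ∈ l, y ∈ P) → l.prod ∈ P ^ l.length := by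
  intro l
  induction l with
  | nil =>
    intro _
    rw [List.prod_nil, List.length_nil, pow_zero]
    exact Submodule.one_le.mp le_rfl
  | cons a l ih =>
    intro h
    rw [List.prod_cons, List.length_cons, pow_succ']
    exact Submodule.mul_mem_mul (h a List.mem_cons_self)
      (ih fun y hy => h y (List.mem_cons_of_mem a hy))

variable (R : Type u) [CommRing R] [Algebra R₀ R] (𝒜 : ℕ → Submodule R₀ R) [GradedAlgebra 𝒜]

theorem pow_le_deg (k : ℕ) : (𝒜 1) ^ k ≤ 𝒜 k := by
  induction k with
  | zero =>
    rw [pow_zero, Submodule.one_le]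
    exact SetLike.one_mem_graded 𝒜
  | succ k ih =>
    rw [pow_succ]
    exact Submodule.mul_le.mpr fun m hm n hn => SetLike.mul_mem_graded (ih hm) hn

theorem iSup_pow_eq_top (hstd : IsStdGraded R₀ R 𝒜) : (⨆ k : ℕ, (𝒜 1) ^ k) = ⊤ := by
  rw [eq_top_iff]
  intro x _
  have hx : x ∈ Subalgebra.toSubmodule (Algebra.adjoin R₀ (𝒜 1 : Set R)) := by
    rw [hstd.adjoin_one]; trivial
  rw [Algebra.adjoin_eq_span] at hx
  refine Submodule.span_le.mpr ?_ hx
  rintro y hy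
  obtain ⟨l, hl, rfl⟩ := Submonoid.exists_list_of_mem_closure hy
  have : l.prod ∈ (𝒜 1) ^ l.length :=
    list_prod_mem_pow (𝒜 1) l fun z hz => hl z hz
  exact le_iSup (fun k => (𝒜 1) ^ k) l.length this

theorem deg_le_pow (hstd : IsStdGraded R₀ R 𝒜) (k : ℕ) : 𝒜 k ≤ (𝒜 1) ^ k := by
  intro x hx
  have hint : DirectSum.IsInternal 𝒜 := DirectSum.Decomposition.isInternal 𝒜
  refine proj_helper hint (pow_le_deg R 𝒜) hx ?_
  rw [iSup_pow_eq_top R 𝒜 hstd]; trivial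

theorem deg_succ_le_mul (hstd : IsStdGraded R₀ R 𝒜) (j : ℕ) :
    𝒜 (j + 1) ≤ 𝒜 1 * 𝒜 j := by
  refine le_trans (deg_le_pow R 𝒜 hstd (j + 1)) ?_
  rw [pow_succ']
  exact mul_le_mul' le_rfl (pow_le_deg R 𝒜 j)

omit [GradedAlgebra 𝒜] in
theorem noetherian_of_std (hstd : IsStdGraded R₀ R 𝒜) [IsNoetherianRing R₀] :
    IsNoetherianRing R := by
  obtain ⟨S, hS⟩ := hstd.fg_one
  have hadj : Algebra.adjoin R₀ (S : Set R) = ⊤ := by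
    rw [eq_top_iff, ← hstd.adjoin_one]
    refine Algebra.adjoin_le ?_
    intro x hx
    have hx' : x ∈ Submodule.span R₀ (S : Set R) := by rw [hS]; exact hx
    exact (Algebra.span_le_adjoin R₀ (S : Set R)) hx'
  have : Algebra.FiniteType R₀ R := ⟨⟨S, hadj⟩⟩
  exact Algebra.FiniteType.isNoetherianRing R₀ R

variable {N : Type u} [AddCommGroup N] [Module R₀ N] [Module R N] [IsScalarTower R₀ R N]

theorem rsmul_iSup_mem (Q : ℤ → Submodule R₀ N)
    (hcl : ∀ (i : ℕ) (r : R), r ∈ 𝒜 i → ∀ (m : ℤ) (y : N), y ∈ Q m → r • y ∈ Q (m + (i : ℤ)))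
    (r : R) (y : N) (hy : y ∈ ⨆ m, Q m) : r • y ∈ ⨆ m, Q m := by
  classical
  refine Submodule.iSup_induction (motive := fun z => r • z ∈ ⨆ m, Q m) Q hy
    (fun m z hz => ?_) (by show r • (0:N) ∈ _; rw [smul_zero]; exact Submodule.zero_mem _)
    (fun a b ha hb => by show r • (a + b) ∈ _; rw [smul_add]; exact Submodule.add_mem _ ha hb)
  show r • z ∈ ⨆ m, Q m
  rw [← DirectSum.sum_support_decompose 𝒜 r, Finset.sum_smul]
  refine Submodule.sum_mem _ fun i _ => ?_
  exact le_iSup Q (m + (i : ℤ)) (hcl i _ (SetLike.coe_mem _) m z hz)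

theorem span_mem_iSup (Q : ℤ → Submodule R₀ N)
    (hcl : ∀ (i : ℕ) (r : R), r ∈ 𝒜 i → ∀ (m : ℤ) (y : N), y ∈ Q m → r • y ∈ Q (m + (i : ℤ)))
    (G : Set N) (hG : ∀ x ∈ G, x ∈ ⨆ m, Q m) :
    ∀ x ∈ Submodule.span R G, x ∈ ⨆ m, Q m := by
  intro x hx
  let P : Submodule R N :=
    { carrier := ((⨆ m, Q m : Submodule R₀ N) : Set N)
      add_mem' := fun ha hb => Submodule.add_mem _ ha hb
      zero_mem' := Submodule.zero_mem _
      smul_mem' := fun r y hy => rsmul_iSup_mem R 𝒜 Q hcl r y hy }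
  exact Submodule.span_le.mpr (fun g hg => show g ∈ P from hG g hg) hx

end Aux

/-- Kirby. A graded module `N` over a standard graded Noetherian ring `R` is
Noetherian if and only if there are integers `t ≤ s` such that `Nₙ = 0` for `n < t`,
`N_{n+1} = R₁ · Nₙ` for `n ≥ s`, and `Nₙ` is a finitely generated `R₀`-module for
`t ≤ n ≤ s`. -/
theorem statement5 (R₀ : Type u) [CommRing R₀] [IsNoetherianRing R₀]
    (R : Type u) [CommRing R] [Algebra R₀ R]
    (𝒜 : ℕ → Submodule R₀ R) [GradedAlgebra 𝒜] (hstd : IsStdGraded R₀ R 𝒜)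
    (N : Type u) [AddCommGroup N] [Module R₀ N] [Module R N] [IsScalarTower R₀ R N]
    (𝒩 : ℤ → Submodule R₀ N) (hN : IsGradedMod R 𝒜 N 𝒩) :
    IsNoetherian R N ↔
      ∃ t s : ℤ, t ≤ s ∧
        (∀ n : ℤ, n < t → 𝒩 n = ⊥) ∧
        (∀ n : ℤ, s ≤ n →
          𝒩 (n + 1) = Submodule.span R₀ {m : N | ∃ r ∈ 𝒜 1, ∃ x ∈ 𝒩 n, m = r • x}) ∧
        (∀ n : ℤ, t ≤ n → n ≤ s → (𝒩 n).FG) := by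
  classical
  have hint := hN.internal
  have hNtop : (⨆ n, 𝒩 n) = ⊤ := hint.submodule_iSup_eq_top
  have hRN : IsNoetherianRing R := noetherian_of_std R 𝒜 hstd
  constructor
  · -- forward direction
    intro hNoeth
    obtain ⟨G₀, hG₀⟩ := IsNoetherian.noetherian (⊤ : Submodule R N)
    have hcomp : ∀ g : N, ∃ f : ℤ →₀ N, (∀ n, f n ∈ 𝒩 n) ∧ (f.sum fun _ x => x) = g := fun g =>
      (Submodule.mem_iSup_iff_exists_finsupp 𝒩 g).mp (by rw [hNtop]; trivial)
    choose F hF1 hF2 using hcomp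
    set V : Set (ℤ × N) := ⋃ g ∈ (G₀ : Set N), (fun n => (n, F g n)) '' ((F g).support : Set ℤ)
      with hV
    have hVfin : V.Finite :=
      Set.Finite.biUnion G₀.finite_toSet fun g _ => ((F g).support.finite_toSet.image _)
    set D : Finset ℤ := insert 0 (hVfin.toFinset.image Prod.fst) with hD
    have hDne : D.Nonempty := ⟨0, Finset.mem_insert_self _ _⟩
    set t := D.min' hDne with ht
    set s := D.max' hDne with hs
    have hts : t ≤ s := Finset.min'_le D s (D.max'_mem hDne)
    have hVD : ∀ p ∈ V, p.1 ∈ D := by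
      intro p hp
      rw [hD]
      exact Finset.mem_insert_of_mem
        (Finset.mem_image.mpr ⟨p, hVfin.mem_toFinset.mpr hp, rfl⟩)
    have hVt : ∀ p ∈ V, t ≤ p.1 := fun p hp => Finset.min'_le D p.1 (hVD p hp)
    have hVs : ∀ p ∈ V, p.1 ≤ s := fun p hp => Finset.le_max' D p.1 (hVD p hp)
    have hVmem : ∀ p ∈ V, p.2 ∈ 𝒩 p.1 := by
      intro p hp
      rw [hV] at hp
      simp only [Set.mem_iUnion, Set.mem_image, Finset.mem_coe, Finset.coe_sort_coe,
        exists_prop] at hp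
      obtain ⟨g, hg, n, hn, rfl⟩ := hp
      exact hF1 g n
    have hspan : Submodule.span R (Prod.snd '' V) = ⊤ := by
      rw [eq_top_iff, ← hG₀]
      refine Submodule.span_le.mpr fun g hg => ?_
      rw [← hF2 g, Finsupp.sum]
      refine Submodule.sum_mem _ fun n hn => Submodule.subset_span ?_
      refine ⟨(n, F g n), ?_, rfl⟩
      rw [hV]
      exact Set.mem_biUnion hg ⟨n, by simpa using hn, rfl⟩
    refine ⟨t, s, hts, ?_, ?_, ?_⟩
    · -- vanishing below t
      intro n hn
      rw [eq_bot_iff]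
      intro x hx
      set Qb : ℤ → Submodule R₀ N := fun m => if t ≤ m then 𝒩 m else ⊥ with hQb
      have hQble : ∀ m, Qb m ≤ 𝒩 m := by
        intro m
        by_cases h : t ≤ m <;> simp [hQb, h]
      have hQbcl : ∀ (i : ℕ) (r : R), r ∈ 𝒜 i →
          ∀ (m : ℤ) (y : N), y ∈ Qb m → r • y ∈ Qb (m + (i : ℤ)) := by
        intro i r hr m y hy
        by_cases h : t ≤ m
        · simp only [hQb]
          rw [if_pos (le_trans h (le_add_of_nonneg_right (Int.natCast_nonneg i)))]
          refine hN.smul_mem i m r y hr ?_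
          simpa only [hQb, if_pos h] using hy
        · have hy0 : y = 0 := by simpa [hQb, if_neg h] using hy
          rw [hy0, smul_zero]
          exact Submodule.zero_mem _
      have hxQ : x ∈ ⨆ m, Qb m := by
        refine span_mem_iSup R 𝒜 Qb hQbcl (Prod.snd '' V) ?_ x (by rw [hspan]; trivial)
        rintro y ⟨p, hp, rfl⟩
        refine le_iSup Qb p.1 ?_
        show p.2 ∈ Qb p.1
        simp only [hQb]
        rw [if_pos (hVt p hp)]
        exact hVmem p hp
      have hfin := proj_helper hint hQble hx hxQ
      simpa only [hQb, if_neg (not_le.mpr hn), Submodule.mem_bot] using hfin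
    · -- growth above s
      intro n hsn
      set gens : ℤ → Set N := fun m => {y | ∃ r ∈ 𝒜 1, ∃ x ∈ 𝒩 (m - 1), y = r • x} with hgens
      set Qc : ℤ → Submodule R₀ N :=
        fun m => if m ≤ s then 𝒩 m else Submodule.span R₀ (gens m) with hQc
      have hgenle : ∀ m, Submodule.span R₀ (gens m) ≤ 𝒩 m := by
        intro m
        refine Submodule.span_le.mpr ?_
        rintro y ⟨r, hr, x, hx, rfl⟩
        have h1 := hN.smul_mem 1 (m - 1) r x hr hx
        rwa [show m - 1 + ((1 : ℕ) : ℤ) = m by push_cast; ring] at h1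
      have hQcle : ∀ m, Qc m ≤ 𝒩 m := by
        intro m
        by_cases h : m ≤ s
        · simp only [hQc]; rw [if_pos h]
        · simp only [hQc]; rw [if_neg h]; exact hgenle m
      have hQccl : ∀ (i : ℕ) (r : R), r ∈ 𝒜 i →
          ∀ (m : ℤ) (y : N), y ∈ Qc m → r • y ∈ Qc (m + (i : ℤ)) := by
        intro i r hr m y hy
        have hy' : y ∈ 𝒩 m := hQcle m hy
        match i with
        | 0 =>
          rw [hstd.degree_zero] at hr
          obtain ⟨c, rfl⟩ := hr
          rw [Algebra.linearMap_apply, algebraMap_smul]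
          simp only [Nat.cast_zero, add_zero]
          exact Submodule.smul_mem _ c hy
        | (j + 1) =>
          by_cases hms : m + ((j + 1 : ℕ) : ℤ) ≤ s
          · simp only [hQc]
            rw [if_pos hms]
            exact hN.smul_mem (j + 1) m r y hr hy'
          · simp only [hQc]
            rw [if_neg hms]
            have hr' : r ∈ 𝒜 1 * 𝒜 j := deg_succ_le_mul R 𝒜 hstd j hr
            refine Submodule.mul_induction_on (C := fun z =>
              z • y ∈ Submodule.span R₀ (gens (m + ((j + 1 : ℕ) : ℤ)))) hr'
              (fun a ha b hb => ?_) (fun u v hu hv => ?_)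
            · show (a * b) • y ∈ _
              rw [mul_smul]
              refine Submodule.subset_span ⟨a, ha, b • y, ?_, rfl⟩
              have h2 := hN.smul_mem j m b y hb hy'
              rwa [show m + ((j : ℕ) : ℤ) = m + ((j + 1 : ℕ) : ℤ) - 1 by push_cast; ring] at h2
            · show (u + v) • y ∈ _
              rw [add_smul]
              exact Submodule.add_mem _ hu hv
      have hGQ : ∀ x ∈ Prod.snd '' V, x ∈ ⨆ m, Qc m := by
        rintro y ⟨p, hp, rfl⟩
        refine le_iSup Qc p.1 ?_
        show p.2 ∈ Qc p.1
        simp only [hQc]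
        rw [if_pos (hVs p hp)]
        exact hVmem p hp
      apply le_antisymm
      · intro x hx
        have hxQ : x ∈ ⨆ m, Qc m :=
          span_mem_iSup R 𝒜 Qc hQccl (Prod.snd '' V) hGQ x (by rw [hspan]; trivial)
        have hx2 := proj_helper hint hQcle hx hxQ
        simp only [hQc] at hx2
        rw [if_neg (by omega : ¬ n + 1 ≤ s)] at hx2
        simp only [hgens] at hx2
        rwa [show n + 1 - 1 = n by ring] at hx2
      · refine Submodule.span_le.mpr ?_
        rintro y ⟨r, hr, x, hx, rfl⟩
        have h1 := hN.smul_mem 1 n r x hr hx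
        rwa [show n + ((1 : ℕ) : ℤ) = n + 1 by push_cast; ring] at h1
    · -- finite generation in the middle range
      intro n htn hns
      have hfgspan : (Submodule.span R ((𝒩 n : Set N))).FG := IsNoetherian.noetherian _
      obtain ⟨T, hTsub, hTfin, hTspan⟩ := exists_finite_subset_span hfgspan
      set Qa : ℤ → Submodule R₀ N := fun m =>
        Submodule.span R₀ {y | ∃ i : ℕ, m = n + (i : ℤ) ∧ ∃ a ∈ 𝒜 i, ∃ x ∈ T, y = a • x}
        with hQa
      have hQale : ∀ m, Qa m ≤ 𝒩 m := by
        intro m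
        simp only [hQa]
        refine Submodule.span_le.mpr ?_
        rintro y ⟨i, rfl, a, ha, x, hx, rfl⟩
        exact hN.smul_mem i n a x ha (hTsub hx)
      have hQacl : ∀ (i : ℕ) (r : R), r ∈ 𝒜 i →
          ∀ (m : ℤ) (y : N), y ∈ Qa m → r • y ∈ Qa (m + (i : ℤ)) := by
        intro i r hr m y hy
        simp only [hQa] at hy ⊢
        refine Submodule.span_induction (p := fun z _ => r • z ∈ Submodule.span R₀
          {y | ∃ i' : ℕ, m + (i : ℤ) = n + (i' : ℤ) ∧ ∃ a ∈ 𝒜 i', ∃ x ∈ T, y = a • x})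
          ?_ ?_ ?_ ?_ hy
        · rintro z ⟨i', rfl, a, ha, x, hx, rfl⟩
          have heq : r • a • x = (a * r) • x := by
            rw [smul_smul, mul_comm]
          show r • a • x ∈ _
          rw [heq]
          exact Submodule.subset_span
            ⟨i' + i, by push_cast; ring, a * r, SetLike.mul_mem_graded ha hr, x, hx, rfl⟩
        · show r • (0 : N) ∈ _
          rw [smul_zero]; exact Submodule.zero_mem _
        · intro u v _ _ hu hv
          show r • (u + v) ∈ _
          rw [smul_add]
          exact Submodule.add_mem _ hu hv
        · intro c z _ hz
          show r • (c • z) ∈ _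
          have hcomm : r • c • z = c • (r • z) := by
            rw [← algebraMap_smul R c z, ← algebraMap_smul R c (r • z), ← mul_smul, ← mul_smul,
              mul_comm]
          rw [hcomm]
          exact Submodule.smul_mem _ c hz
      have hTQ : ∀ x ∈ T, x ∈ ⨆ m, Qa m := by
        intro x hx
        refine le_iSup Qa n ?_
        show x ∈ Qa n
        simp only [hQa]
        exact Submodule.subset_span
          ⟨0, by simp, 1, SetLike.one_mem_graded 𝒜, x, hx, (one_smul R x).symm⟩
      have key : ∀ x ∈ 𝒩 n, x ∈ Submodule.span R₀ T := by
        intro x hx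
        have hx1 : x ∈ Submodule.span R T := by
          rw [hTspan]; exact Submodule.subset_span hx
        have hx2 : x ∈ ⨆ m, Qa m := span_mem_iSup R 𝒜 Qa hQacl T hTQ x hx1
        have hx3 := proj_helper hint hQale hx hx2
        simp only [hQa] at hx3
        refine Submodule.span_le.mpr ?_ hx3
        rintro y ⟨i, hi, a, ha, z, hz, rfl⟩
        have hi0 : i = 0 := by omega
        subst hi0
        rw [hstd.degree_zero] at ha
        obtain ⟨c, rfl⟩ := ha
        rw [Algebra.linearMap_apply, algebraMap_smul]
        exact Submodule.smul_mem _ c (Submodule.subset_span hz)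
      have heqn : 𝒩 n = Submodule.span R₀ T :=
        le_antisymm key (Submodule.span_le.mpr hTsub)
      rw [heqn]
      exact Submodule.fg_span hTfin
  · -- backward direction
    rintro ⟨t, s, hts, hbot, hstep, hfg⟩
    have hFin : Module.Finite R N := by
      set P : Submodule R N := ⨆ m ∈ Finset.Icc t s, Submodule.span R ((𝒩 m : Set N)) with hP
      have hPfg : P.FG := by
        refine Submodule.fg_biSup _ _ fun m hm => ?_
        rw [Finset.mem_Icc] at hm
        obtain ⟨T, hT⟩ := hfg m hm.1 hm.2
        rw [← hT, Submodule.span_span_of_tower]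
        exact Submodule.fg_span T.finite_toSet
      have hmem : ∀ k : ℕ, ∀ x ∈ 𝒩 (s + (k : ℤ)), x ∈ P := by
        intro k
        induction k with
        | zero =>
          intro x hx
          refine le_biSup (fun m => Submodule.span R ((𝒩 m : Set N)))
            (Finset.mem_Icc.mpr ⟨hts, le_refl s⟩) ?_
          simp only [Nat.cast_zero, add_zero] at hx
          exact Submodule.subset_span hx
        | succ k ih =>
          intro x hx
          have hx' : x ∈ 𝒩 (s + (k : ℤ) + 1) := by
            rw [show s + (k : ℤ) + 1 = s + ((k + 1 : ℕ) : ℤ) by push_cast; ring]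
            exact hx
          rw [hstep (s + (k : ℤ)) (by omega)] at hx'
          have hle : Submodule.span R₀ {m | ∃ r ∈ 𝒜 1, ∃ x ∈ 𝒩 (s + (k : ℤ)), m = r • x} ≤
              P.restrictScalars R₀ := by
            refine Submodule.span_le.mpr ?_
            rintro y ⟨r, hr, z, hz, rfl⟩
            show r • z ∈ P
            exact Submodule.smul_mem P r (ih z hz)
          exact hle hx'
      have hallmem : ∀ n : ℤ, ∀ x ∈ 𝒩 n, x ∈ P := by
        intro n x hx
        rcases lt_or_ge n t with h | h
        · rw [hbot n h] at hx
          simpa using (Submodule.mem_bot R₀).mp hx ▸ P.zero_mem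
        · rcases le_or_gt n s with h2 | h2
          · refine le_biSup (fun m => Submodule.span R ((𝒩 m : Set N)))
              (Finset.mem_Icc.mpr ⟨h, h2⟩) (Submodule.subset_span hx)
          · have hn : s + ((n - s).toNat : ℤ) = n := by omega
            exact hmem (n - s).toNat x (by rwa [hn])
      have hPtop : P = ⊤ := by
        rw [eq_top_iff]
        intro x _
        have hx : x ∈ ⨆ n, 𝒩 n := by rw [hNtop]; trivial
        exact Submodule.iSup_induction (motive := fun z => z ∈ P) 𝒩 hx
          (fun n z hz => hallmem n z hz) P.zero_mem (fun a b ha hb => P.add_mem ha hb)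
      exact ⟨hPtop ▸ hPfg⟩
    exact isNoetherian_of_isNoetherianRing_of_finite R N


end Paper
end
end

section
/- Let R be a standard graded Noetherian ring and N a graded R-module. Then N is an Artinian R-module if and only if there exist integers v ≤ u such that: N_n = 0 for all n > u; the annihilator of R₁ in N_n is zero for all n ≤ v (i.e., (0 :_{N_n} R₁) = 0); and N_n is an Artinian R₀-module for all v ≤ n ≤ u. -/
open CategoryTheory Opposite

noncomputable section

universe u

namespace Paper

variable {R₀ : Type u} [CommRing R₀]

section Melkersson
universe v
variable {A : Type*} [CommRing A]

theorem melkersson_single {M : Type v} [AddCommGroup M] [Module A M] (r : A)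
    (tor : ∀ x : M, ∃ m : ℕ, r ^ m • x = 0)
    (hS : IsArtinian A (LinearMap.ker (LinearMap.lsmul A M r))) :
    IsArtinian A M := by
  rw [← monotone_stabilizes_iff_artinian]
  intro f
  set S := LinearMap.ker (LinearMap.lsmul A M r) with hSdef
  set NN : ℕ → Submodule A M := fun i => OrderDual.ofDual (f i) with hNN
  have hanti : ∀ {i i' : ℕ}, i ≤ i' → NN i' ≤ NN i := fun {i i'} h => f.monotone h
  set C : ℕ → ℕ → Submodule A ↥S := fun i j =>
    Submodule.comap S.subtype (Submodule.map (LinearMap.lsmul A M (r ^ j)) (NN i)) with hC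
  have hCi : ∀ (j : ℕ) {i i' : ℕ}, i ≤ i' → C i' j ≤ C i j := by
    intro j i i' h
    exact Submodule.comap_mono (Submodule.map_mono (hanti h))
  have hCj : ∀ i j, C i (j + 1) ≤ C i j := by
    intro i j
    apply Submodule.comap_mono
    rintro x ⟨y, hy, rfl⟩
    refine ⟨r • y, Submodule.smul_mem _ r hy, ?_⟩
    simp only [LinearMap.lsmul_apply, pow_succ, mul_smul]
  have hCj' : ∀ i, ∀ {j j' : ℕ}, j ≤ j' → C i j' ≤ C i j := by
    intro i j j' h
    exact antitone_nat_of_succ_le (hCj i) h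
  have stab : ∀ j : ℕ, ∃ ij : ℕ, ∀ i, ij ≤ i → C ij j = C i j := by
    intro j
    obtain ⟨n, hn⟩ := IsArtinian.monotone_stabilizes
      (⟨fun i => OrderDual.toDual (C i j), fun i i' h => hCi j h⟩ : ℕ →o (Submodule A ↥S)ᵒᵈ)
    exact ⟨n, fun i h => hn i h⟩
  choose iidx hiidx using stab
  set D : ℕ → Submodule A ↥S := fun j => C (iidx j) j with hD
  have hDle : ∀ (i j : ℕ), D j ≤ C i j := by
    intro i j
    calc D j = C (max i (iidx j)) j := hiidx j _ (le_max_right _ _)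
    _ ≤ C i j := hCi j (le_max_left _ _)
  have hDanti : ∀ j, D (j + 1) ≤ D j := by
    intro j
    calc D (j+1) ≤ C (iidx j) (j+1) := hDle _ _
    _ ≤ C (iidx j) j := hCj _ _
  obtain ⟨J, hJ⟩ := IsArtinian.monotone_stabilizes
      (⟨fun j => OrderDual.toDual (D j), fun j j' h => antitone_nat_of_succ_le hDanti h⟩ :
        ℕ →o (Submodule A ↥S)ᵒᵈ)
  set I : ℕ := (Finset.range (J + 1)).sup iidx with hI
  have key : ∀ (j i : ℕ), I ≤ i → C i j = C I j := by
    intro j i hi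
    have hIJ : iidx J ≤ I := Finset.le_sup (Finset.mem_range.mpr (by omega))
    rcases le_or_gt j J with hjJ | hjJ
    · have h1 : iidx j ≤ I := Finset.le_sup (Finset.mem_range.mpr (by omega))
      rw [← hiidx j i (le_trans h1 hi), ← hiidx j I h1]
    · have hDj : D j = D J := (hJ j (le_of_lt hjJ)).symm
      have le1 : ∀ i', I ≤ i' → C i' j ≤ D J := by
        intro i' hi'
        calc C i' j ≤ C i' J := hCj' i' (le_of_lt hjJ)
        _ = C (iidx J) J := (hiidx J i' (le_trans hIJ hi')).symm
        _ = D J := rfl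
      have ge1 : ∀ i' : ℕ, D J ≤ C i' j := fun i' => hDj ▸ hDle i' j
      exact le_antisymm (le_trans (le1 i hi) (ge1 I)) (le_trans (le1 I le_rfl) (ge1 i))
  refine ⟨I, fun i hi => ?_⟩
  have main : ∀ m : ℕ, ∀ x ∈ NN I, r ^ m • x = 0 → x ∈ NN i := by
    intro m
    induction m with
    | zero => intro x hx h0; rw [pow_zero, one_smul] at h0; rw [h0]; exact zero_mem _
    | succ m ih =>
      intro x hx h0
      have hyS : r ^ m • x ∈ S := by
        simp only [hSdef, LinearMap.mem_ker, LinearMap.lsmul_apply]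
        rw [smul_smul, ← pow_succ', h0]
      have hyC : (⟨r ^ m • x, hyS⟩ : ↥S) ∈ C I m := by
        simp only [hC, Submodule.mem_comap, Submodule.coe_subtype]
        exact ⟨x, hx, by simp [LinearMap.lsmul_apply]⟩
      rw [← key m i hi] at hyC
      simp only [hC, Submodule.mem_comap, Submodule.coe_subtype] at hyC
      obtain ⟨z, hz, hzeq⟩ := hyC
      simp only [LinearMap.lsmul_apply] at hzeq
      have hxz : x - z ∈ NN I := sub_mem hx (hanti hi hz)
      have hxz0 : r ^ m • (x - z) = 0 := by rw [smul_sub, hzeq, sub_self]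
      have hx' : x = (x - z) + z := by abel
      rw [hx']
      exact add_mem (ih (x - z) hxz hxz0) hz
  have : NN I = NN i := by
    refine le_antisymm (fun x hx => ?_) (hanti hi)
    obtain ⟨m, hm⟩ := tor x
    exact main m x hx hm
  exact this

theorem melkersson_list : ∀ (l : List A) {M : Type v} [AddCommGroup M] [Module A M]
    (S : Submodule A M), (∀ x : M, x ∈ S ↔ ∀ r ∈ l, r • x = 0) →
    (∀ x : M, ∀ r ∈ l, ∃ m : ℕ, r ^ m • x = 0) →
    IsArtinian A ↥S → IsArtinian A M := by
  intro l
  induction l with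
  | nil =>
    intro M _ _ S hSdef tor hart
    have hS : S = ⊤ := eq_top_iff.2 fun x _ => (hSdef x).2 (by simp)
    rw [hS] at hart
    exact isArtinian_of_linearEquiv (Submodule.topEquiv)
  | cons r t ih =>
    intro M _ _ S hSdef tor hart
    set T := LinearMap.ker (LinearMap.lsmul A M r) with hT
    have hST : S ≤ T := by
      intro x hx
      simp only [hT, LinearMap.mem_ker, LinearMap.lsmul_apply]
      exact (hSdef x).1 hx r List.mem_cons_self
    set S' : Submodule A ↥T := Submodule.comap T.subtype S with hS'
    have hS'def : ∀ x : ↥T, x ∈ S' ↔ ∀ r' ∈ t, r' • x = 0 := by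
      intro x
      simp only [hS', Submodule.mem_comap, Submodule.coe_subtype]
      constructor
      · intro h r' hr'
        have := (hSdef ↑x).1 h r' (List.mem_cons_of_mem r hr')
        exact Subtype.ext (by simpa using this)
      · intro h
        refine (hSdef ↑x).2 ?_
        intro r' hr'
        rcases List.mem_cons.mp hr' with h1 | h2
        · subst h1
          exact LinearMap.mem_ker.mp x.2
        · have := congrArg (Subtype.val) (h r' h2)
          simpa using this
    have tor' : ∀ (x : ↥T), ∀ r' ∈ t, ∃ m : ℕ, r' ^ m • x = 0 := by
      intro x r' hr'
      obtain ⟨m, hm⟩ := tor ↑x r' (List.mem_cons_of_mem r hr')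
      exact ⟨m, Subtype.ext (by simpa using hm)⟩
    haveI : IsArtinian A ↥S' :=
      isArtinian_of_linearEquiv (Submodule.comapSubtypeEquivOfLe hST).symm
    haveI : IsArtinian A ↥T := ih S' hS'def tor' this
    exact melkersson_single r (fun x => tor x r List.mem_cons_self) this

end Melkersson

/-- Kirby. A graded module `N` over a standard graded Noetherian ring `R` is
Artinian if and only if there are integers `v ≤ u` such that `Nₙ = 0` for `n > u`,
`(0 :_{Nₙ} R₁) = 0` for `n ≤ v`, and `Nₙ` is an Artinian `R₀`-module for `v ≤ n ≤ u`. -/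
theorem statement6 (R₀ : Type u) [CommRing R₀] [IsNoetherianRing R₀]
    (R : Type u) [CommRing R] [Algebra R₀ R]
    (𝒜 : ℕ → Submodule R₀ R) [GradedAlgebra 𝒜] (hstd : IsStdGraded R₀ R 𝒜)
    (N : Type u) [AddCommGroup N] [Module R₀ N] [Module R N] [IsScalarTower R₀ R N]
    (𝒩 : ℤ → Submodule R₀ N) (hN : IsGradedMod R 𝒜 N 𝒩) :
    IsArtinian R N ↔
      ∃ v u : ℤ, v ≤ u ∧
        (∀ n : ℤ, u < n → 𝒩 n = ⊥) ∧
        (∀ n : ℤ, n ≤ v → ∀ x ∈ 𝒩 n, (∀ r ∈ 𝒜 1, r • x = 0) → x = 0) ∧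
        (∀ n : ℤ, v ≤ n → n ≤ u → IsArtinian R₀ ↥(𝒩 n)) := by
  classical
  have hindep : iSupIndep 𝒩 := hN.internal.submodule_iSupIndep
  have htopN : (⨆ n, 𝒩 n) = ⊤ := hN.internal.submodule_iSup_eq_top
  have hAtop : (⨆ d, 𝒜 d) = ⊤ :=
    (DirectSum.Decomposition.isInternal 𝒜).submodule_iSup_eq_top
  have hmemN : ∀ x : N, x ∈ ⨆ n, 𝒩 n := fun x => by rw [htopN]; trivial
  have hmemA : ∀ r : R, r ∈ ⨆ d, 𝒜 d := fun r => by rw [hAtop]; trivial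
  -- degree shift by one
  have hmem1 : ∀ (r : R), r ∈ 𝒜 1 → ∀ {n : ℤ} {x : N}, x ∈ 𝒩 n → r • x ∈ 𝒩 (n + 1) := by
    intro r hr n x hx
    have := hN.smul_mem 1 n r x hr hx
    simpa using this
  have hpow : ∀ (r : R), r ∈ 𝒜 1 → ∀ (m : ℕ) {n : ℤ} {x : N}, x ∈ 𝒩 n →
      r ^ m • x ∈ 𝒩 (n + (m : ℤ)) := by
    intro r hr m
    induction m with
    | zero => intro n x hx; simpa using hx
    | succ m ih =>
      intro n x hx
      have h1 := hmem1 r hr (ih hx)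
      have : r ^ (m+1) • x = r • r ^ m • x := by rw [pow_succ', mul_smul]
      rw [this]
      convert h1 using 2
      push_cast; ring
  -- the decomposition equivalence
  set E := (LinearEquiv.ofBijective (DirectSum.coeLinearMap 𝒩) hN.internal).symm with hE
  have hEcoe : ∀ (n m : ℤ) (x : N) (hx : x ∈ 𝒩 m),
      ((E x n : ↥(𝒩 n)) : N) = if n = m then x else 0 := by
    intro n m x hx
    by_cases h : n = m
    · subst h
      rw [hN.internal.ofBijective_coeLinearMap_of_mem hx, if_pos rfl]
    · rw [hN.internal.ofBijective_coeLinearMap_of_mem_ne (fun hmn => h hmn.symm) hx, if_neg h]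
      rfl
  have hcomm : ∀ (r : R), r ∈ 𝒜 1 → ∀ (n : ℤ) (x : N),
      ((E (r • x) (n+1) : ↥(𝒩 (n+1))) : N) = r • ((E x n : ↥(𝒩 n)) : N) := by
    intro r hr n x
    refine Submodule.iSup_induction (motive := fun y : N =>
      ((E (r • y) (n+1) : ↥(𝒩 (n+1))) : N) = r • ((E y n : ↥(𝒩 n)) : N)) 𝒩 (hmemN x)
      ?_ ?_ ?_
    · intro m y hy
      have h1 : r • y ∈ 𝒩 (m+1) := hmem1 r hr hy
      rw [hEcoe (n+1) (m+1) _ h1, hEcoe n m y hy]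
      by_cases h : n = m
      · rw [if_pos (by omega), if_pos h]
      · rw [if_neg (by omega), if_neg h, smul_zero]
    · simp
    · intro y z hy hz
      rw [smul_add, map_add, map_add]
      push_cast [DirectSum.add_apply]
      rw [hy, hz, smul_add]
  -- closure of upper parts under the R-action
  have hgeclosed : ∀ (k : ℤ) (r : R) (z : N), z ∈ (⨆ m : {m : ℤ // k ≤ m}, 𝒩 ↑m) →
      r • z ∈ (⨆ m : {m : ℤ // k ≤ m}, 𝒩 ↑m) := by
    intro k r z hz
    refine Submodule.iSup_induction (motive := fun y : N =>
      r • y ∈ (⨆ m : {m : ℤ // k ≤ m}, 𝒩 ↑m)) _ hz ?_ (by simp) ?_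
    · rintro ⟨m, hm⟩ y hy
      refine Submodule.iSup_induction (motive := fun s : R =>
        s • y ∈ (⨆ m : {m : ℤ // k ≤ m}, 𝒩 ↑m)) 𝒜 (hmemA r) ?_ (by simp) ?_
      · intro d s hs
        have := hN.smul_mem d m s y hs hy
        exact Submodule.mem_iSup_of_mem ⟨m + (d : ℤ), by omega⟩ this
      · intro s s' h1 h2
        rw [add_smul]; exact add_mem h1 h2
    · intro y y' h1 h2
      rw [smul_add]; exact add_mem h1 h2
  -- the socle submodule
  set B : Submodule R N :=
    { carrier := {x : N | ∀ r ∈ 𝒜 1, r • x = 0}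
      add_mem' := fun h1 h2 => fun r hr => by
        rw [smul_add, h1 r hr, h2 r hr, add_zero]
      zero_mem' := fun r hr => smul_zero r
      smul_mem' := fun s x hx => fun r hr => by
        rw [smul_comm, hx r hr, smul_zero] } with hB
  have hBmem : ∀ x : N, x ∈ B ↔ ∀ r ∈ 𝒜 1, r • x = 0 := fun x => Iff.rfl
  constructor
  · -- FORWARD
    intro hArt
    -- (a) each component is Artinian over R₀
    have harta : ∀ n : ℤ, IsArtinian R₀ ↥(𝒩 n) := by
      intro n
      have hclos : ∀ (L : Submodule R₀ ↥(𝒩 n)) (r : R) (z : N),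
          z ∈ (L.map (𝒩 n).subtype ⊔ (⨆ m : {m : ℤ // n+1 ≤ m}, 𝒩 ↑m)) →
          r • z ∈ (L.map (𝒩 n).subtype ⊔ (⨆ m : {m : ℤ // n+1 ≤ m}, 𝒩 ↑m)) := by
        intro L r z hz
        rcases Submodule.mem_sup.mp hz with ⟨l, hl, w, hw, rfl⟩
        rw [smul_add]
        refine add_mem ?_ (Submodule.mem_sup_right (hgeclosed _ r w hw))
        have hlmem : l ∈ 𝒩 n := Submodule.map_subtype_le _ _ hl
        refine Submodule.iSup_induction (motive := fun s : R =>
          s • l ∈ (L.map (𝒩 n).subtype ⊔ (⨆ m : {m : ℤ // n+1 ≤ m}, 𝒩 ↑m))) 𝒜 (hmemA r)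
          ?_ (by simp) ?_
        · intro d s hs
          match d with
          | 0 =>
            rw [hstd.degree_zero] at hs
            obtain ⟨a, rfl⟩ := hs
            have : (Algebra.linearMap R₀ R) a • l = a • l := by
              simp [Algebra.linearMap_apply, algebraMap_smul]
            rw [this]
            exact Submodule.mem_sup_left (Submodule.smul_mem _ a hl)
          | (d+1 : ℕ) =>
            have := hN.smul_mem (d+1) n s l hs hlmem
            exact Submodule.mem_sup_right
              (Submodule.mem_iSup_of_mem ⟨n + ((d+1 : ℕ) : ℤ), by omega⟩ this)
        · intro s s' h1 h2
          rw [add_smul]; exact add_mem h1 h2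
      set Lext : Submodule R₀ ↥(𝒩 n) → Submodule R N := fun L =>
        { carrier := (L.map (𝒩 n).subtype ⊔ (⨆ m : {m : ℤ // n+1 ≤ m}, 𝒩 ↑m) : Submodule R₀ N)
          add_mem' := fun h1 h2 => add_mem h1 h2
          zero_mem' := zero_mem _
          smul_mem' := fun r z hz => hclos L r z hz } with hLext
      have hLextMem : ∀ (L : Submodule R₀ ↥(𝒩 n)) (z : N), z ∈ Lext L ↔
          z ∈ (L.map (𝒩 n).subtype ⊔ (⨆ m : {m : ℤ // n+1 ≤ m}, 𝒩 ↑m)) := fun L z => Iff.rfl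
      have hmono : Monotone Lext := by
        intro L L' h x hx
        rw [hLextMem] at hx ⊢
        exact sup_le_sup_right (α := Submodule R₀ N) (Submodule.map_mono h) _ hx
      have hdisj : Disjoint (𝒩 n) (⨆ m ∈ {m' : ℤ | m' ≠ n}, 𝒩 m) :=
        hindep.disjoint_biSup (by simp)
      have hle2 : (⨆ m : {m : ℤ // n+1 ≤ m}, 𝒩 ↑m) ≤ ⨆ m ∈ {m' : ℤ | m' ≠ n}, 𝒩 m := by
        refine iSup_le ?_
        rintro ⟨m, hm⟩
        exact le_iSup₂_of_le m (show m ≠ n by omega) le_rfl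
      have hstrict : StrictMono Lext := by
        intro L L' hLL
        refine lt_of_le_of_ne (hmono hLL.le) (fun heq => ?_)
        obtain ⟨x, hxL', hxL⟩ := SetLike.exists_of_lt hLL
        have hx1 : (↑x : N) ∈ Lext L' :=
          (hLextMem L' ↑x).2 (Submodule.mem_sup_left ⟨x, hxL', rfl⟩)
        rw [← heq] at hx1
        rw [hLextMem] at hx1
        rcases Submodule.mem_sup.mp hx1 with ⟨l, hl, w, hw, hsum⟩
        have hlN : l ∈ 𝒩 n := Submodule.map_subtype_le _ _ hl
        have hwn : w ∈ 𝒩 n := by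
          have hwe : w = (↑x : N) - l := by rw [← hsum]; abel
          rw [hwe]
          exact sub_mem x.2 hlN
        have hw0 : w = 0 := by
          have : w ∈ 𝒩 n ⊓ (⨆ m ∈ {m' : ℤ | m' ≠ n}, 𝒩 m) :=
            Submodule.mem_inf.mpr ⟨hwn, hle2 hw⟩
          simpa using hdisj.le_bot this
        have hxl : (↑x : N) = l := by rw [← hsum, hw0, add_zero]
        obtain ⟨x', hx', hx'eq⟩ := hl
        have : x = x' := Subtype.ext (by rw [hxl, ← hx'eq]; rfl)
        exact hxL (this ▸ hx')
      exact ⟨Subrelation.wf (fun {L L'} h => hstrict h) (InvImage.wf Lext (IsWellFounded.wf))⟩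
    -- (b) vanishing in large degrees
    have hclosN : ∀ (k : ℤ), ∀ (r : R) (z : N), z ∈ (⨆ m : {m : ℤ // k ≤ m}, 𝒩 ↑m) →
        r • z ∈ (⨆ m : {m : ℤ // k ≤ m}, 𝒩 ↑m) := hgeclosed
    set Nge : ℤ → Submodule R N := fun k =>
      { carrier := (⨆ m : {m : ℤ // k ≤ m}, 𝒩 ↑m : Submodule R₀ N)
        add_mem' := fun h1 h2 => add_mem h1 h2
        zero_mem' := zero_mem _
        smul_mem' := fun r z hz => hclosN k r z hz } with hNge
    have hNgeMem : ∀ (k : ℤ) (z : N), z ∈ Nge k ↔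
        z ∈ (⨆ m : {m : ℤ // k ≤ m}, 𝒩 ↑m : Submodule R₀ N) := fun k z => Iff.rfl
    have hNgeManti : ∀ {k k' : ℤ}, k ≤ k' → Nge k' ≤ Nge k := by
      intro k k' h z hz
      rw [hNgeMem] at hz ⊢
      refine (iSup_le ?_ : _ ≤ (⨆ m : {m : ℤ // k ≤ m}, 𝒩 ↑m)) hz
      rintro ⟨m, hm⟩
      exact le_iSup (fun m : {m : ℤ // k ≤ m} => 𝒩 ↑m) ⟨m, le_trans h hm⟩
    obtain ⟨K, hK⟩ := IsArtinian.monotone_stabilizes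
      (⟨fun j : ℕ => OrderDual.toDual (Nge (j : ℤ)),
        fun j j' h => hNgeManti (by exact_mod_cast h)⟩ : ℕ →o (Submodule R N)ᵒᵈ)
    have hzero : ∀ n : ℤ, (K : ℤ) < n → 𝒩 n = ⊥ := by
      intro n hn
      have e1 : Nge ((n.toNat : ℕ) : ℤ) = Nge ((K : ℕ) : ℤ) := (hK n.toNat (by omega)).symm
      have e2 : Nge (((n+1).toNat : ℕ) : ℤ) = Nge ((K : ℕ) : ℤ) := (hK (n+1).toNat (by omega)).symm
      have hc1 : ((n.toNat : ℕ) : ℤ) = n := Int.toNat_of_nonneg (by omega)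
      have hc2 : (((n+1).toNat : ℕ) : ℤ) = n + 1 := Int.toNat_of_nonneg (by omega)
      rw [hc1] at e1
      rw [hc2] at e2
      have hsub : 𝒩 n ≤ (⨆ m : {m : ℤ // n+1 ≤ m}, 𝒩 ↑m : Submodule R₀ N) := by
        intro x hx
        have h3 : x ∈ Nge n := (hNgeMem n x).2
          (Submodule.mem_iSup_of_mem (⟨n, le_rfl⟩ : {m : ℤ // n ≤ m}) hx)
        rw [e1, ← e2] at h3
        exact (hNgeMem (n+1) x).1 h3
      have hdisj : Disjoint (𝒩 n) (⨆ m ∈ {m' : ℤ | m' ≠ n}, 𝒩 m) :=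
        hindep.disjoint_biSup (by simp)
      have hle2 : (⨆ m : {m : ℤ // n+1 ≤ m}, 𝒩 ↑m) ≤ ⨆ m ∈ {m' : ℤ | m' ≠ n}, 𝒩 m := by
        refine iSup_le ?_
        rintro ⟨m, hm⟩
        exact le_iSup₂_of_le m (show m ≠ n by omega) le_rfl
      refine (Submodule.eq_bot_iff _).mpr fun x hx => ?_
      have : x ∈ 𝒩 n ⊓ (⨆ m ∈ {m' : ℤ | m' ≠ n}, 𝒩 m) :=
        Submodule.mem_inf.mpr ⟨hx, hle2 (hsub hx)⟩
      simpa using hdisj.le_bot this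
    -- (c) vanishing of the socle in low degrees
    have hIdealKill : ∀ x ∈ B, ∀ i ∈ Ideal.span ((𝒜 1 : Set R)), i • x = 0 := by
      intro x hx i hi
      have h1 : Ideal.span ((𝒜 1 : Set R)) ≤ LinearMap.ker (LinearMap.toSpanSingleton R N x) := by
        rw [Ideal.span_le]
        intro r hr
        simpa [LinearMap.mem_ker, LinearMap.toSpanSingleton_apply] using hx r hr
      simpa [LinearMap.mem_ker, LinearMap.toSpanSingleton_apply] using h1 hi
    have hL2 : ∀ r : R, ∃ a : R₀, r - algebraMap R₀ R a ∈ Ideal.span ((𝒜 1 : Set R)) := by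
      intro r
      have hr : r ∈ Algebra.adjoin R₀ ((𝒜 1 : Set R)) := by rw [hstd.adjoin_one]; trivial
      induction hr using Algebra.adjoin_induction with
      | mem x hx => exact ⟨0, by simpa using Ideal.subset_span hx⟩
      | algebraMap a => exact ⟨a, by simp⟩
      | add x y hx hy ihx ihy =>
        obtain ⟨a, ha⟩ := ihx
        obtain ⟨b, hb⟩ := ihy
        refine ⟨a + b, ?_⟩
        rw [map_add]
        convert add_mem ha hb using 1
        ring
      | mul x y hx hy ihx ihy =>
        obtain ⟨a, ha⟩ := ihx
        obtain ⟨b, hb⟩ := ihy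
        refine ⟨a * b, ?_⟩
        have h1 : x * (y - algebraMap R₀ R b) ∈ Ideal.span ((𝒜 1 : Set R)) :=
          Ideal.mul_mem_left _ x hb
        have h2 : (x - algebraMap R₀ R a) * algebraMap R₀ R b ∈ Ideal.span ((𝒜 1 : Set R)) :=
          Ideal.mul_mem_right _ _ ha
        have h3 := add_mem h1 h2
        convert h3 using 1
        rw [map_mul]
        ring
    have hVclos : ∀ (c : ℤ) (r : R) (z : N),
        z ∈ (B.restrictScalars R₀ ⊓ (⨆ m : {m : ℤ // m ≤ c}, 𝒩 ↑m)) →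
        r • z ∈ (B.restrictScalars R₀ ⊓ (⨆ m : {m : ℤ // m ≤ c}, 𝒩 ↑m)) := by
      intro c r z hz
      rw [Submodule.mem_inf] at hz ⊢
      obtain ⟨hzB, hzQ⟩ := hz
      rw [Submodule.restrictScalars_mem] at hzB
      obtain ⟨a, ha⟩ := hL2 r
      have h0 : (r - algebraMap R₀ R a) • z = 0 := hIdealKill z hzB _ ha
      have heq : r • z = a • z := by
        rw [sub_smul] at h0
        have := sub_eq_zero.mp h0
        rw [this, algebraMap_smul]
      constructor
      · rw [Submodule.restrictScalars_mem]
        exact B.smul_mem r hzB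
      · rw [heq]
        exact Submodule.smul_mem _ a hzQ
    set V : ℤ → Submodule R N := fun c =>
      { carrier := (B.restrictScalars R₀ ⊓ (⨆ m : {m : ℤ // m ≤ c}, 𝒩 ↑m) : Submodule R₀ N)
        add_mem' := fun h1 h2 => add_mem h1 h2
        zero_mem' := zero_mem _
        smul_mem' := fun r z hz => hVclos c r z hz } with hV
    have hVMem : ∀ (c : ℤ) (z : N), z ∈ V c ↔
        z ∈ (B.restrictScalars R₀ ⊓ (⨆ m : {m : ℤ // m ≤ c}, 𝒩 ↑m) : Submodule R₀ N) :=
      fun c z => Iff.rfl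
    have hVmono : ∀ {c c' : ℤ}, c ≤ c' → V c ≤ V c' := by
      intro c c' h z hz
      rw [hVMem] at hz ⊢
      refine ⟨hz.1, ?_⟩
      refine (iSup_le ?_ : _ ≤ (⨆ m : {m : ℤ // m ≤ c'}, 𝒩 ↑m)) hz.2
      rintro ⟨m, hm⟩
      exact le_iSup (fun m : {m : ℤ // m ≤ c'} => 𝒩 ↑m) ⟨m, le_trans hm h⟩
    have hsocv : ∃ v : ℤ, v ≤ (K : ℤ) ∧
        ∀ n ≤ v, ∀ x ∈ 𝒩 n, (∀ r ∈ 𝒜 1, r • x = 0) → x = 0 := by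
      by_contra hcon
      push_neg at hcon
      have H2 : ∀ w : ℤ, ∃ n : ℤ, n ≤ w ∧
          ∃ x, x ∈ 𝒩 n ∧ (∀ r ∈ 𝒜 1, r • x = 0) ∧ x ≠ 0 := by
        intro w
        obtain ⟨n, hn1, x, hx1, hx2, hx3⟩ := hcon (min w (K : ℤ)) (min_le_right _ _)
        exact ⟨n, le_trans hn1 (min_le_left _ _), x, hx1, hx2, hx3⟩
      choose F hF1 hF2 using H2
      set g : ℕ → ℤ := fun k => Nat.rec (F 0) (fun _ p => F (p - 1)) k with hg
      have wit : ∀ k : ℕ, ∃ x, x ∈ 𝒩 (g k) ∧ (∀ r ∈ 𝒜 1, r • x = 0) ∧ x ≠ 0 := by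
        intro k
        cases k with
        | zero => exact hF2 0
        | succ k => exact hF2 (g k - 1)
      have hdec : ∀ k : ℕ, g (k+1) < g k := by
        intro k
        have : g (k+1) = F (g k - 1) := rfl
        rw [this]
        have := hF1 (g k - 1)
        omega
      have hdec' : ∀ {k k' : ℕ}, k ≤ k' → g k' ≤ g k := by
        intro k k' h
        exact antitone_nat_of_succ_le (fun j => (hdec j).le) h
      obtain ⟨K2, hK2⟩ := IsArtinian.monotone_stabilizes
        (⟨fun k : ℕ => OrderDual.toDual (V (g k)),
          fun k k' h => hVmono (hdec' h)⟩ : ℕ →o (Submodule R N)ᵒᵈ)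
      obtain ⟨x, hx1, hx2, hx3⟩ := wit K2
      have hxV : x ∈ V (g K2) := by
        rw [hVMem, Submodule.mem_inf]
        refine ⟨by rw [Submodule.restrictScalars_mem]; exact hx2, ?_⟩
        exact Submodule.mem_iSup_of_mem (⟨g K2, le_rfl⟩ : {m : ℤ // m ≤ g K2}) hx1
      have hVeq : V (g K2) = V (g (K2+1)) := hK2 (K2+1) (by omega)
      have hxV' : x ∈ V (g (K2+1)) := hVeq ▸ hxV
      have hxQ : x ∈ (⨆ m : {m : ℤ // m ≤ g (K2+1)}, 𝒩 ↑m : Submodule R₀ N) :=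
        ((hVMem _ x).1 hxV').2
      have hdisj : Disjoint (𝒩 (g K2)) (⨆ m ∈ {m' : ℤ | m' ≠ g K2}, 𝒩 m) :=
        hindep.disjoint_biSup (by simp)
      have hle2 : (⨆ m : {m : ℤ // m ≤ g (K2+1)}, 𝒩 ↑m) ≤ ⨆ m ∈ {m' : ℤ | m' ≠ g K2}, 𝒩 m := by
        refine iSup_le ?_
        rintro ⟨m, hm⟩
        have := hdec K2
        exact le_iSup₂_of_le m (show m ≠ g K2 by omega) le_rfl
      have : x ∈ 𝒩 (g K2) ⊓ (⨆ m ∈ {m' : ℤ | m' ≠ g K2}, 𝒩 m) :=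
        Submodule.mem_inf.mpr ⟨hx1, hle2 hxQ⟩
      exact hx3 (by simpa using hdisj.le_bot this)
    obtain ⟨v, hvK, hv⟩ := hsocv
    exact ⟨v, (K : ℤ), hvK, hzero, hv, fun n _ _ => harta n⟩
  · -- BACKWARD
    rintro ⟨v, u, hvu, htop0, hsoc, hart⟩
    obtain ⟨s, hs⟩ := hstd.fg_one
    set l := s.toList with hldef
    have hl1 : ∀ r ∈ l, r ∈ 𝒜 1 := by
      intro r hr
      rw [← hs]
      exact Submodule.subset_span (by simpa using (Finset.mem_toList).1 hr)
    have hBl : ∀ x : N, x ∈ B ↔ ∀ r ∈ l, r • x = 0 := by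
      intro x
      constructor
      · exact fun hx r hr => hx r (hl1 r hr)
      · intro h r hr
        rw [← hs] at hr
        induction hr using Submodule.span_induction with
        | mem r' hr' => exact h r' ((Finset.mem_toList).2 (by simpa using hr'))
        | zero => exact zero_smul R x
        | add a b _ _ iha ihb => rw [add_smul, iha, ihb, add_zero]
        | smul a r' _ ih => rw [smul_assoc, ih, smul_zero]
    have htor : ∀ (x : N) (r : R), r ∈ 𝒜 1 → ∃ m : ℕ, r ^ m • x = 0 := by
      intro x r hr
      refine Submodule.iSup_induction (motive := fun y : N => ∃ m : ℕ, r ^ m • y = 0) 𝒩 (hmemN x)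
        ?_ ⟨0, by simp⟩ ?_
      · intro n y hy
        rcases le_or_gt n u with h | h
        · refine ⟨(u + 1 - n).toNat, ?_⟩
          have hmem := hpow r hr (u+1-n).toNat hy
          have hb : 𝒩 (n + (((u+1-n).toNat : ℕ) : ℤ)) = ⊥ := htop0 _ (by omega)
          rw [hb] at hmem
          simpa using hmem
        · have hy0 : y = 0 := by
            have := htop0 n h ▸ hy
            simpa using this
          exact ⟨0, by simp [hy0]⟩
      · rintro y z ⟨m1, h1⟩ ⟨m2, h2⟩
        refine ⟨m1 + m2, ?_⟩
        rw [smul_add]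
        have e1 : r ^ (m1+m2) • y = 0 := by rw [pow_add, mul_comm, mul_smul, h1, smul_zero]
        have e2 : r ^ (m1+m2) • z = 0 := by rw [pow_add, mul_smul, h2, smul_zero]
        rw [e1, e2, add_zero]
    -- the socle is Artinian
    haveI hIccArt : ∀ p : {x : ℤ // x ∈ Finset.Icc v u}, IsArtinian R₀ ↥(𝒩 ↑p) := by
      rintro ⟨p, hp⟩
      exact hart p (Finset.mem_Icc.mp hp).1 (Finset.mem_Icc.mp hp).2
    set φ : ↥B →ₗ[R₀] ((p : {x : ℤ // x ∈ Finset.Icc v u}) → ↥(𝒩 ↑p)) :=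
      LinearMap.pi (fun p => (DFinsupp.lapply (↑p : ℤ)).comp
        (E.toLinearMap.comp (LinearMap.restrictScalars R₀ B.subtype))) with hφ
    have hφinj : Function.Injective φ := by
      refine (injective_iff_map_eq_zero φ).2 ?_
      intro x hx
      have hcoe : ∀ n : ℤ, E (↑x : N) n = 0 := by
        intro n
        by_cases hn : n ∈ Finset.Icc v u
        · have := congrFun hx ⟨n, hn⟩
          simpa [hφ, LinearMap.pi_apply] using this
        · rcases le_or_gt n u with h | h
          · have hnv : n < v := by
              rcases Finset.mem_Icc.not.mp hn with h'
              omega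
            have hmem : (↑(E (↑x:N) n) : N) ∈ 𝒩 n := (E (↑x:N) n).2
            have hkill : ∀ r ∈ 𝒜 1, r • (↑(E (↑x:N) n) : N) = 0 := by
              intro r hr
              rw [← hcomm r hr n ↑x]
              have hx0 : r • (↑x : N) = 0 := x.2 r hr
              rw [hx0]
              simp
            have := hsoc n (by omega) _ hmem hkill
            exact Subtype.ext (by simpa using this)
          · have hb := htop0 n h
            have h0 : (↑(E (↑x:N) n) : N) = 0 :=
              (Submodule.eq_bot_iff _).mp hb _ (E (↑x:N) n).2
            exact Subtype.ext (by simpa using h0)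
      have hE0 : E (↑x : N) = E 0 := by
        rw [map_zero]
        exact DFunLike.ext _ _ hcoe
      exact Subtype.ext (E.injective hE0)
    haveI hBart0 : IsArtinian R₀ ↥B := isArtinian_of_injective φ hφinj
    haveI hBart : IsArtinian R ↥B := isArtinian_of_tower R₀ hBart0
    exact melkersson_list l B hBl (fun x r hr => htor x r (hl1 r hr)) hBart

end Paper
end
end
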